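/- Let ρ be an n-qubit state (a 2ⁿ×2ⁿ positive semidefinite complex matrix of trace 1, indexed by 𝔽₂ⁿ), let m ≥ 1, let ε₁, …, ε_m ≥ 0, and let S₁, …, S_m ⊆ 𝔽₂^{2n} be subspaces satisfying (1/|Sᵢ|) Σ_{x ∈ Sᵢ} (tr(ρ W_x))² ≥ 1 − εᵢ for every i. Then the subspace S = S₁ + S₂ + … + S_m satisfies (1/|S|) Σ_{x ∈ S} (tr(ρ W_x))² ≥ 1 − Σ_{i=1}^{m} εᵢ. -/

import Mathlib

open ComplexOrder

/-- The field with two elements. -/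
abbrev F2 := ZMod 2

/-- The phase space `V = 𝔽₂ⁿ × 𝔽₂ⁿ`. -/
abbrev V (n : ℕ) : Type := (Fin n → F2) × (Fin n → F2)

/-- The Weyl operator `W_v` with entries
`(W_v)_{x,y} = i^{vₓ·v_z} (−1)^{v_z·y} 1{x = y + vₓ}`. -/
noncomputable def Weyl {n : ℕ} (v : V n) : Matrix (Fin n → F2) (Fin n → F2) ℂ :=
  fun x y =>
    Complex.I ^ (∑ i, (v.1 i).val * (v.2 i).val) *
      (-1 : ℂ) ^ (∑ i, (v.2 i) * (y i)).val *
      (if x = y + v.1 then 1 else 0)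

/-- The average squared Pauli weight
`(1/|S|) Σ_{x ∈ S} (tr(ρ W_x))²` of a subspace `S ⊆ 𝔽₂^{2n}`;
since `ρ` and `W_x` are Hermitian, `tr(ρ W_x)` is real and we take its real part. -/
noncomputable def avgWeight {n : ℕ} (ρ : Matrix (Fin n → F2) (Fin n → F2) ℂ)
    (S : Submodule F2 (V n)) : ℝ :=
  (Nat.card S : ℝ)⁻¹ *
    ∑ᶠ x ∈ (S : Set (V n)), ((Matrix.trace (ρ * Weyl x)).re) ^ 2

open scoped MatrixOrder Matrix in
theorem Matrix.posSemidef_iff_eq_transpose_mul_self {ι : Type*} [Fintype ι] [DecidableEq ι]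
    {A : Matrix ι ι ℂ} : A.PosSemidef ↔ ∃ B : Matrix ι ι ℂ, A = Bᴴ * B := by
  constructor
  · intro h
    obtain ⟨B, hB⟩ := CStarAlgebra.nonneg_iff_eq_star_mul_self.mp h.nonneg
    exact ⟨B, hB⟩
  · rintro ⟨B, rfl⟩
    exact Matrix.posSemidef_conjTranspose_mul_self B

namespace Stmt19
open Matrix
def q {n : ℕ} (v : V n) : ℕ := ∑ i, (v.1 i).val * (v.2 i).val
lemma f2_add_self (a : F2) : a + a = 0 := CharTwo.add_self_eq_zero a
lemma vadd_self {n : ℕ} (v : V n) : v + v = 0 := by ext i <;> exact f2_add_self _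
lemma neg_one_pow_congr {a b : ℕ} (h : (a : ZMod 2) = (b : ZMod 2)) :
    (-1 : ℂ) ^ a = (-1 : ℂ) ^ b := by
  have h2 : a % 2 = b % 2 := (ZMod.natCast_eq_natCast_iff a b 2).1 h
  rw [neg_one_pow_eq_pow_mod_two, h2, ← neg_one_pow_eq_pow_mod_two]
lemma val_cast (s : F2) : ((s.val : ZMod 2)) = s := by rw [ZMod.natCast_val, ZMod.cast_id]
lemma neg_one_val_add (s t : F2) :
    (-1 : ℂ) ^ (s + t).val = (-1 : ℂ) ^ s.val * (-1 : ℂ) ^ t.val := by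
  rw [← pow_add]; refine neg_one_pow_congr ?_; push_cast [val_cast]; ring
lemma eq_add_comm' {n : ℕ} {x y w : Fin n → F2} : x = y + w ↔ y = x + w := by
  constructor <;> rintro rfl <;> ext i <;> simp [add_assoc, f2_add_self]

variable {n : ℕ}

lemma weyl_apply (v : V n) (x y : Fin n → F2) :
    Weyl v x y = Complex.I ^ q v * (-1 : ℂ) ^ (∑ i, (v.2 i) * (y i)).val *
      (if x = y + v.1 then 1 else 0) := rfl

lemma weyl_zero : Weyl (0 : V n) = 1 := by
  ext x y
  simp [weyl_apply, q, Matrix.one_apply, eq_comm]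

/-- scalar relating `W_u W_v` to `W_{u+v}` -/
noncomputable def c (u v : V n) : ℂ :=
  Complex.I ^ q u * Complex.I ^ q v * (-1 : ℂ) ^ (∑ i, (u.2 i) * (v.1 i)).val *
    (Complex.I ^ q (u + v))⁻¹

lemma weyl_mul (u v : V n) : Weyl u * Weyl v = c u v • Weyl (u + v) := by
  ext x y
  rw [Matrix.mul_apply]
  rw [Finset.sum_eq_single (x + u.1)]
  · -- main term
    have hxu : x = (x + u.1) + u.1 := by ext i; simp [add_assoc, f2_add_self]
    rw [weyl_apply, weyl_apply, if_pos hxu]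
    by_cases h : x + u.1 = y + v.1
    · have hx : x = y + (u + v).1 := by
        rw [eq_add_comm'] at h ⊢
        rw [h]; ext i; simp [Prod.fst_add]; ring
      rw [if_pos h, Matrix.smul_apply, weyl_apply, if_pos hx, c]
      have hsum : (∑ i, u.2 i * (x + u.1) i) = (∑ i, u.2 i * (y i)) + ∑ i, u.2 i * (v.1 i) := by
        rw [← Finset.sum_add_distrib]
        refine Finset.sum_congr rfl fun i _ => ?_
        have : (x + u.1) i = y i + v.1 i := by rw [h]; simp
        rw [this]; ring
      have hsum2 : (∑ i, (u+v).2 i * (y i)) = (∑ i, u.2 i * (y i)) + ∑ i, v.2 i * (y i) := by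
        rw [← Finset.sum_add_distrib]
        refine Finset.sum_congr rfl fun i _ => ?_
        simp [Prod.snd_add]; ring
      rw [hsum, hsum2, neg_one_val_add, neg_one_val_add]
      have hI : (Complex.I ^ q (u+v))⁻¹ * Complex.I ^ q (u+v) = 1 := by
        refine inv_mul_cancel₀ (pow_ne_zero _ Complex.I_ne_zero)
      field_simp
      rw [smul_eq_mul, div_mul_eq_mul_div, eq_div_iff (pow_ne_zero _ Complex.I_ne_zero)]
      ring
    · have hx : ¬ x = y + (u + v).1 := by
        intro hx
        apply h
        rw [eq_add_comm'] at hx ⊢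
        rw [hx]; ext i; simp [Prod.fst_add]; ring
      rw [if_neg h, Matrix.smul_apply, weyl_apply, if_neg hx]
      simp
  · -- other terms vanish
    intro z _ hz
    rw [weyl_apply, if_neg, mul_zero, zero_mul]
    intro hxz
    exact hz (by rw [eq_add_comm'] at hxz; exact hxz.symm ▸ rfl)
  · intro hmem
    exact absurd (Finset.mem_univ _) hmem

lemma q_parity (v : V n) : ((q v : ZMod 2)) = ((∑ i, (v.2 i) * (v.1 i)).val : ZMod 2) := by
  rw [val_cast, q]
  push_cast
  refine Finset.sum_congr rfl fun i _ => ?_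
  rw [val_cast, val_cast]
  ring

lemma c_self (v : V n) : c v v = 1 := by
  rw [c, vadd_self]
  have hq0 : q (0 : V n) = 0 := by simp [q]
  rw [hq0, pow_zero, inv_one, mul_one, ← pow_add]
  rw [neg_one_pow_congr (q_parity v).symm]
  have h2 : Complex.I ^ (q v + q v) = ((-1:ℂ)) ^ q v := by
    rw [← two_mul, pow_mul, Complex.I_sq]
  rw [h2, ← mul_pow]
  norm_num

lemma weyl_sq (v : V n) : Weyl v * Weyl v = 1 := by
  rw [weyl_mul, c_self, one_smul, vadd_self, weyl_zero]


lemma weyl_isHermitian (v : V n) : (Weyl v).IsHermitian := by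
  ext x y
  rw [Matrix.conjTranspose_apply, weyl_apply, weyl_apply]
  by_cases h : x = y + v.1
  · have h' : y = x + v.1 := eq_add_comm'.1 h
    rw [if_pos h', if_pos h]
    have hsum : (∑ i, v.2 i * (x i)) = (∑ i, v.2 i * (y i)) + ∑ i, v.2 i * (v.1 i) := by
      rw [← Finset.sum_add_distrib]
      refine Finset.sum_congr rfl fun i _ => ?_
      have : x i = y i + v.1 i := by rw [h]; simp
      rw [this]; ring
    rw [hsum, neg_one_val_add]
    simp only [mul_one, star_mul', star_pow, Complex.star_def, Complex.conj_I, map_neg, _root_.map_one]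
    rw [show ((-1:ℂ)) ^ (∑ i, v.2 i * (v.1 i)).val = (-1:ℂ) ^ (q v) from
      (neg_one_pow_congr (q_parity v)).symm]
    rw [neg_pow]
    have hx2 : ((-1:ℂ)) ^ q v * (-1:ℂ) ^ q v = 1 := by
      rw [← pow_add, ← two_mul, pow_mul]; norm_num
    linear_combination (Complex.I ^ q v * (-1:ℂ) ^ (∑ i, v.2 i * (y i)).val) * hx2
  · have h' : ¬ y = x + v.1 := fun hy => h (eq_add_comm'.1 hy)
    rw [if_neg h', if_neg h]
    simp


open Kronecker

lemma c_mul_c (x y : V n) : c x y * c y x = 1 := by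
  have h1 : Weyl x * Weyl y * (Weyl y * Weyl x) = 1 := by
    rw [mul_assoc, ← mul_assoc (Weyl y) (Weyl y) (Weyl x), weyl_sq, one_mul, weyl_sq]
  rw [weyl_mul x y, weyl_mul y x, add_comm y x] at h1
  rw [Matrix.smul_mul, Matrix.mul_smul, weyl_sq, smul_smul] at h1
  have h2 : ((c x y * c y x) • (1 : Matrix (Fin n → F2) (Fin n → F2) ℂ)) (fun _ => 0) (fun _ => 0)
      = (1 : Matrix (Fin n → F2) (Fin n → F2) ℂ) (fun _ => 0) (fun _ => 0) := by
    rw [h1]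
  simpa [Matrix.smul_apply, Matrix.one_apply] using h2

lemma transpose_conjT {l m : Type*} (A : Matrix l m ℂ) : (Aᵀ)ᴴ = (Aᴴ)ᵀ := by
  ext i j
  simp

lemma kron_conjT {l m p r : Type*} (A : Matrix l m ℂ) (B : Matrix p r ℂ) :
    (A ⊗ₖ B)ᴴ = Aᴴ ⊗ₖ Bᴴ := by
  ext i j
  simp [Matrix.conjTranspose_apply]

/-- the doubled Weyl operator `W_x ⊗ W_xᵀ` -/
noncomputable def G (x : V n) :
    Matrix ((Fin n → F2) × (Fin n → F2)) ((Fin n → F2) × (Fin n → F2)) ℂ :=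
  Weyl x ⊗ₖ (Weyl x)ᵀ

lemma G_mul (x y : V n) : G x * G y = G (x + y) := by
  unfold G
  rw [← Matrix.mul_kronecker_mul, ← Matrix.transpose_mul]
  rw [weyl_mul x y, weyl_mul y x, add_comm y x]
  rw [Matrix.transpose_smul, Matrix.smul_kronecker, Matrix.kronecker_smul, smul_smul,
    c_mul_c, one_smul]

lemma G_zero : G (0 : V n) = 1 := by
  unfold G
  rw [weyl_zero, Matrix.transpose_one]
  exact Matrix.one_kronecker_one

lemma G_herm (x : V n) : (G x)ᴴ = G x := by
  unfold G
  rw [kron_conjT, (weyl_isHermitian x).eq, transpose_conjT, (weyl_isHermitian x).eq]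


/-- the underlying finset of a subspace -/
noncomputable def fs (S : Submodule F2 (V n)) : Finset (V n) :=
  (Set.toFinite (S : Set (V n))).toFinset

lemma mem_fs {S : Submodule F2 (V n)} {x : V n} : x ∈ fs S ↔ x ∈ S :=
  Set.Finite.mem_toFinset _

lemma card_fs (S : Submodule F2 (V n)) : (fs S).card = Nat.card S := by
  rw [← Set.ncard_coe_finset, fs, Set.Finite.coe_toFinset]
  exact (Nat.card_coe_set_eq _).symm

lemma card_fs_ne_zero (S : Submodule F2 (V n)) : ((fs S).card : ℂ) ≠ 0 := by
  exact_mod_cast Nat.cast_ne_zero.2 (Finset.card_ne_zero_of_mem (mem_fs.2 S.zero_mem))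

lemma char2_rearrange {a b c d : V n} (h : a + b = c + d) : a + c = b + d := by
  have h1 : a + c = (a + b) + (b + c) := by
    rw [show (a + b) + (b + c) = a + (b + b) + c by abel, vadd_self, add_zero]
  rw [h1, h, show (c + d) + (b + c) = (c + c) + (d + b) by abel, vadd_self, zero_add, add_comm]

/-- the projection onto the joint eigenspace -/
noncomputable def P (S : Submodule F2 (V n)) :
    Matrix ((Fin n → F2) × (Fin n → F2)) ((Fin n → F2) × (Fin n → F2)) ℂ :=
  (((fs S).card : ℂ))⁻¹ • ∑ x ∈ fs S, G x

lemma maps_to_sup (S T : Submodule F2 (V n)) :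
    ∀ p ∈ (fs S) ×ˢ (fs T), p.1 + p.2 ∈ fs (S ⊔ T) := by
  rintro ⟨x, y⟩ hp
  rw [Finset.mem_product] at hp
  exact mem_fs.2 (Submodule.add_mem_sup (mem_fs.1 hp.1) (mem_fs.1 hp.2))

lemma fiber_card [DecidableEq (V n)] (S T : Submodule F2 (V n)) {z : V n} (hz : z ∈ fs (S ⊔ T)) :
    (((fs S) ×ˢ (fs T)).filter (fun p => p.1 + p.2 = z)).card = (fs (S ⊓ T)).card := by
  obtain ⟨s₀, hs₀, t₀, ht₀, hst⟩ := Submodule.mem_sup.1 (mem_fs.1 hz)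
  apply Finset.card_bij' (fun p _ => p.1 + s₀) (fun w _ => (w + s₀, w + t₀))
  · rintro ⟨x, y⟩ hp
    rw [Finset.mem_filter, Finset.mem_product] at hp
    obtain ⟨⟨hx, hy⟩, hxy⟩ := hp
    have hx' : x + s₀ = y + t₀ := char2_rearrange (by rw [show x + y = z from hxy, ← hst])
    refine mem_fs.2 (Submodule.mem_inf.2 ⟨S.add_mem (mem_fs.1 hx) hs₀, ?_⟩)
    rw [hx']
    exact T.add_mem (mem_fs.1 hy) ht₀
  · intro w hw
    have hw' := Submodule.mem_inf.1 (mem_fs.1 hw)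
    rw [Finset.mem_filter, Finset.mem_product]
    refine ⟨⟨mem_fs.2 (S.add_mem hw'.1 hs₀), mem_fs.2 (T.add_mem hw'.2 ht₀)⟩, ?_⟩
    calc w + s₀ + (w + t₀) = s₀ + t₀ + (w + w) := by abel
      _ = z := by rw [vadd_self, add_zero, hst]
  · rintro ⟨x, y⟩ hp
    rw [Finset.mem_filter, Finset.mem_product] at hp
    obtain ⟨⟨hx, hy⟩, hxy⟩ := hp
    have hx' : x + s₀ = y + t₀ := char2_rearrange (by rw [show x + y = z from hxy, ← hst])
    have h1 : x + s₀ + s₀ = x := by rw [add_assoc, vadd_self, add_zero]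
    have h2 : x + s₀ + t₀ = y := by rw [hx', add_assoc, vadd_self, add_zero]
    exact Prod.ext h1 h2
  · intro w hw
    rw [add_assoc, vadd_self, add_zero]

lemma key_sum [DecidableEq (V n)] (S T : Submodule F2 (V n)) :
    ∑ x ∈ fs S, ∑ y ∈ fs T, G (x + y)
      = ((fs (S ⊓ T)).card) • ∑ z ∈ fs (S ⊔ T), G z := by
  rw [← Finset.sum_product']
  calc ∑ p ∈ (fs S) ×ˢ (fs T), G (p.1 + p.2)
      = ∑ z ∈ fs (S ⊔ T), ∑ p ∈ ((fs S) ×ˢ (fs T)).filter (fun p => p.1 + p.2 = z),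
          G (p.1 + p.2) := (Finset.sum_fiberwise_of_maps_to (maps_to_sup S T) _).symm
    _ = ∑ z ∈ fs (S ⊔ T), ((fs (S ⊓ T)).card) • G z := by
        refine Finset.sum_congr rfl fun z hz => ?_
        rw [Finset.sum_congr rfl (fun p hp => by rw [(Finset.mem_filter.1 hp).2]),
          Finset.sum_const, fiber_card S T hz]
    _ = ((fs (S ⊓ T)).card) • ∑ z ∈ fs (S ⊔ T), G z := by rw [Finset.smul_sum]

lemma card_identity (S T : Submodule F2 (V n)) :
    (fs S).card * (fs T).card = (fs (S ⊓ T)).card * (fs (S ⊔ T)).card := by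
  classical
  have h := Finset.card_eq_sum_card_fiberwise (maps_to_sup S T)
  rw [Finset.card_product] at h
  rw [h, Finset.sum_congr rfl (fun z hz => fiber_card S T hz), Finset.sum_const,
    smul_eq_mul, mul_comm]

lemma P_mul_P (S T : Submodule F2 (V n)) : P S * P T = P (S ⊔ T) := by
  classical
  unfold P
  rw [Matrix.smul_mul, Matrix.mul_smul, smul_smul, Finset.sum_mul_sum]
  have : ∑ i ∈ fs S, ∑ j ∈ fs T, G i * G j = ∑ i ∈ fs S, ∑ j ∈ fs T, G (i + j) := by
    refine Finset.sum_congr rfl fun i _ => Finset.sum_congr rfl fun j _ => G_mul i j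
  rw [this, key_sum, ← Nat.cast_smul_eq_nsmul ℂ, smul_smul]
  congr 1
  have hST := card_identity S T
  have h1 := card_fs_ne_zero S
  have h2 := card_fs_ne_zero T
  have h3 := card_fs_ne_zero (S ⊔ T)
  field_simp
  rw [show (((fs S).card : ℂ)) * ((fs T).card : ℂ) = (((fs S).card * (fs T).card : ℕ) : ℂ) by
    push_cast; ring, hST]
  push_cast
  ring

lemma P_herm (S : Submodule F2 (V n)) : (P S)ᴴ = P S := by
  unfold P
  rw [Matrix.conjTranspose_smul, Matrix.conjTranspose_sum]
  congr 1
  · simp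
  · exact Finset.sum_congr rfl fun x _ => G_herm x


lemma diag_nonneg {ι : Type*} [Fintype ι] [DecidableEq ι] {M : Matrix ι ι ℂ}
    (h : M.PosSemidef) (i : ι) : 0 ≤ M i i := by
  exact h.diag_nonneg

lemma trace_re_nonneg {ι : Type*} [Fintype ι] [DecidableEq ι] {M : Matrix ι ι ℂ}
    (h : M.PosSemidef) : 0 ≤ M.trace.re := by
  rw [Matrix.trace, Complex.re_sum]
  exact Finset.sum_nonneg fun i _ => (Complex.le_def.1 (diag_nonneg h i)).1

lemma trace_mul_psd_re_nonneg {ι : Type*} [Fintype ι] [DecidableEq ι] {A B : Matrix ι ι ℂ}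
    (hA : A.PosSemidef) (hB : B.PosSemidef) : 0 ≤ (A * B).trace.re := by
  obtain ⟨C, rfl⟩ := Matrix.posSemidef_iff_eq_transpose_mul_self.mp hB
  rw [← mul_assoc, Matrix.trace_mul_cycle]
  exact trace_re_nonneg (hA.mul_mul_conjTranspose_same C)

section KeyIneq

variable {τ : Matrix ((Fin n → F2) × (Fin n → F2)) ((Fin n → F2) × (Fin n → F2)) ℂ}

lemma key_ineq (hτ : τ.PosSemidef) (hτ1 : τ.trace = 1) (S T : Submodule F2 (V n)) :
    (τ * P S).trace.re + (τ * P T).trace.re - 1 ≤ (τ * P (S ⊔ T)).trace.re := by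
  classical
  set PA := P S with hPAdef
  set PB := P T with hPBdef
  set K := P (S ⊔ T) with hKdef
  have hAA : PA * PA = PA := by rw [hPAdef, P_mul_P, sup_idem]
  have hBB : PB * PB = PB := by rw [hPBdef, P_mul_P, sup_idem]
  have hAB : PA * PB = K := by rw [hPAdef, hPBdef, P_mul_P, hKdef]
  have hBA : PB * PA = K := by rw [hPAdef, hPBdef, P_mul_P, hKdef, sup_comm]
  have hAK : PA * K = K := by
    have e : S ⊔ (S ⊔ T) = S ⊔ T := by rw [← sup_assoc, sup_idem]
    rw [hPAdef, hKdef, P_mul_P, e]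
  have hKA : K * PA = K := by
    have e : (S ⊔ T) ⊔ S = S ⊔ T := by rw [sup_comm S T, sup_assoc, sup_idem]
    rw [hPAdef, hKdef, P_mul_P, e]
  have hBK : PB * K = K := by
    have e : T ⊔ (S ⊔ T) = S ⊔ T := by rw [sup_comm S T, ← sup_assoc, sup_idem]
    rw [hPBdef, hKdef, P_mul_P, e]
  have hKB : K * PB = K := by
    have e : (S ⊔ T) ⊔ T = S ⊔ T := by rw [sup_assoc, sup_idem]
    rw [hPBdef, hKdef, P_mul_P, e]
  have hKK : K * K = K := by rw [hKdef, P_mul_P, sup_idem]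
  have hMherm : (1 - PA - PB + K)ᴴ = 1 - PA - PB + K := by
    rw [Matrix.conjTranspose_add, Matrix.conjTranspose_sub, Matrix.conjTranspose_sub,
      Matrix.conjTranspose_one, hPAdef, hPBdef, hKdef, P_herm, P_herm, P_herm]
  have hMM : (1 - PA - PB + K)ᴴ * (1 - PA - PB + K) = 1 - PA - PB + K := by
    rw [hMherm]
    calc (1 - PA - PB + K) * (1 - PA - PB + K)
        = 1*1 - 1*PA - 1*PB + 1*K - PA*1 + PA*PA + PA*PB - PA*K - PB*1 + PB*PA + PB*PB
            - PB*K + K*1 - K*PA - K*PB + K*K := by noncomm_ring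
      _ = 1 - PA - PB + K := by
          simp only [one_mul, mul_one, hAA, hBB, hAB, hBA, hAK, hKA, hBK, hKB, hKK]
          abel
  have hpsdM : (1 - PA - PB + K).PosSemidef := by
    rw [← hMM]
    exact Matrix.posSemidef_conjTranspose_mul_self _
  have h0 := trace_mul_psd_re_nonneg hτ hpsdM
  have hsplit : (τ * (1 - PA - PB + K)).trace
      = τ.trace - (τ*PA).trace - (τ*PB).trace + (τ*K).trace := by
    rw [Matrix.mul_add, Matrix.mul_sub, Matrix.mul_sub, Matrix.mul_one,
      Matrix.trace_add, Matrix.trace_sub, Matrix.trace_sub]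
  rw [hsplit, hτ1] at h0
  simp only [Complex.add_re, Complex.sub_re, Complex.one_re] at h0
  linarith

end KeyIneq


section Avg

variable {ρ : Matrix (Fin n → F2) (Fin n → F2) ℂ}

lemma trace_rho_weyl_real (hρ : ρ.IsHermitian) (x : V n) :
    (ρ * Weyl x).trace = (((ρ * Weyl x).trace.re : ℝ) : ℂ) := by
  have h1 : ((ρ * Weyl x)ᴴ).trace = star (ρ * Weyl x).trace := Matrix.trace_conjTranspose _
  rw [Matrix.conjTranspose_mul, hρ.eq, (weyl_isHermitian x).eq, Matrix.trace_mul_comm] at h1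
  exact (Complex.conj_eq_iff_re.1 h1.symm).symm

lemma trace_G_eq (x : V n) :
    ((ρ ⊗ₖ ρᵀ) * G x).trace = ((ρ * Weyl x).trace) ^ 2 := by
  unfold G
  rw [← Matrix.mul_kronecker_mul, Matrix.trace_kronecker, ← Matrix.transpose_mul,
    Matrix.trace_transpose, Matrix.trace_mul_comm, sq]

lemma avgWeight_eq (hρ : ρ.IsHermitian) (S : Submodule F2 (V n)) :
    avgWeight ρ S = (((ρ ⊗ₖ ρᵀ) * P S).trace).re := by
  rw [avgWeight]
  have hset : (S : Set (V n)) = ↑(fs S) := by rw [fs, Set.Finite.coe_toFinset]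
  rw [hset, finsum_mem_coe_finset, ← card_fs]
  unfold P
  rw [Matrix.mul_smul, Matrix.trace_smul, Matrix.mul_sum, Matrix.trace_sum]
  have hterm : ∀ x ∈ fs S, ((ρ ⊗ₖ ρᵀ) * G x).trace
      = (((((ρ * Weyl x).trace.re) ^ 2 : ℝ)) : ℂ) := by
    intro x _
    rw [trace_G_eq, trace_rho_weyl_real hρ x, Complex.ofReal_re]
    push_cast
    ring
  rw [Finset.sum_congr rfl hterm, ← Complex.ofReal_sum, smul_eq_mul,
    show (((fs S).card : ℂ))⁻¹ = (((((fs S).card : ℝ))⁻¹ : ℝ) : ℂ) by push_cast; ring,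
    ← Complex.ofReal_mul, Complex.ofReal_re]

end Avg

end Stmt19

open Stmt19 Matrix Kronecker

/-- For an `n`-qubit state `ρ` (PSD, trace 1), `m ≥ 1`, `ε₁, …, ε_m ≥ 0` and
subspaces `S₁, …, S_m ⊆ 𝔽₂^{2n}` with
`(1/|Sᵢ|) Σ_{x ∈ Sᵢ} (tr(ρ W_x))² ≥ 1 − εᵢ` for all `i`, the sum
`S = S₁ + ⋯ + S_m` satisfies `(1/|S|) Σ_{x ∈ S} (tr(ρ W_x))² ≥ 1 − Σᵢ εᵢ`. -/
theorem stmt19 (n m : ℕ) (hm : 1 ≤ m)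
    (ρ : Matrix (Fin n → F2) (Fin n → F2) ℂ)
    (hpsd : ρ.PosSemidef) (htr : ρ.trace = 1)
    (ε : Fin m → ℝ) (hε : ∀ i, 0 ≤ ε i)
    (S : Fin m → Submodule F2 (V n))
    (h : ∀ i, 1 - ε i ≤ avgWeight ρ (S i)) :
    1 - ∑ i, ε i ≤ avgWeight ρ (⨆ i, S i) := by
  classical
  have hρh : ρ.IsHermitian := hpsd.1
  have hτpsd : (ρ ⊗ₖ ρᵀ).PosSemidef := by
    obtain ⟨B, hB⟩ := Matrix.posSemidef_iff_eq_transpose_mul_self.mp hpsd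
    obtain ⟨C, hC⟩ := Matrix.posSemidef_iff_eq_transpose_mul_self.mp hpsd.transpose
    rw [hC, hB, Matrix.mul_kronecker_mul, ← kron_conjT]
    exact Matrix.posSemidef_conjTranspose_mul_self _
  have hτ1 : (ρ ⊗ₖ ρᵀ).trace = 1 := by
    rw [Matrix.trace_kronecker, Matrix.trace_transpose, htr]
    norm_num
  have claim : ∀ (t : Finset (Fin m)) (ht : t.Nonempty),
      1 - ∑ i ∈ t, ε i ≤ (((ρ ⊗ₖ ρᵀ) * P (⨆ i ∈ t, S i)).trace).re := by
    intro t ht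
    refine Finset.Nonempty.cons_induction ?_ ?_ ht
    · intro a
      rw [Finset.iSup_singleton, Finset.sum_singleton, ← avgWeight_eq hρh]
      exact h a
    · intro a t hat hne IH
      rw [Finset.sum_cons, Finset.cons_eq_insert, Finset.iSup_insert]
      have hk := key_ineq hτpsd hτ1 (S a) (⨆ i ∈ t, S i)
      have ha := h a
      rw [avgWeight_eq hρh] at ha
      linarith
  have : Nonempty (Fin m) := ⟨⟨0, hm⟩⟩
  have huniv := claim Finset.univ Finset.univ_nonempty
  rw [show (⨆ i ∈ Finset.univ, S i) = ⨆ i, S i by simp] at huniv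
  rw [avgWeight_eq hρh]
  simpa using huniv
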